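/- Let U ⊆ ℂ be open and let f : U → ℂ² be holomorphic with f'(z) ≠ 0 and f^N(z) ≠ 0 for all z ∈ U. Then the map z ↦ conj(f*(z)) (componentwise complex conjugation of f*(z) = f^N(z)/(2‖f^N(z)‖²)) is holomorphic on U; that is, the dual f* of the holomorphic curve f is an anti-holomorphic curve in ℂ². -/

import Mathlib

open scoped BigOperators ComplexConjugate

/-- The Hermitian inner product `⟪Z,W⟫ = Z₁·conj W₁ + Z₂·conj W₂` on `ℂ²`
(linear in the first slot). -/
noncomputable def herm (Z W : Fin 2 → ℂ) : ℂ := ∑ j, Z j * conj (W j)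

/-- The normal component of the position vector of a holomorphic curve `f : U → ℂ²`:
`f^N(z) = f(z) − (⟪f z, f' z⟫/⟪f' z, f' z⟫)·f'(z)`. -/
noncomputable def posN (f : ℂ → Fin 2 → ℂ) (z : ℂ) : Fin 2 → ℂ :=
  f z - (herm (f z) (deriv f z) / herm (deriv f z) (deriv f z)) • deriv f z

/-- The dual curve `f*(z) = f^N(z)/(2‖f^N(z)‖²)`; note `‖f^N(z)‖² = ⟪f^N z, f^N z⟫`. -/
noncomputable def dualCurve (f : ℂ → Fin 2 → ℂ) (z : ℂ) : Fin 2 → ℂ :=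
  (2 * herm (posN f z) (posN f z))⁻¹ • posN f z

lemma herm_two (Z W : Fin 2 → ℂ) : herm Z W = Z 0 * conj (W 0) + Z 1 * conj (W 1) := by
  simp [herm, Fin.sum_univ_two]

lemma key (f : ℂ → Fin 2 → ℂ) (w : ℂ) (h1 : deriv f w ≠ 0) (h2 : posN f w ≠ 0) :
    (fun j => conj (dualCurve f w j)) =
      fun j => (2 * (f w 0 * deriv f w 1 - f w 1 * deriv f w 0))⁻¹ *
        ![deriv f w 1, -(deriv f w 0)] j := by
  set a := f w 0 with ha
  set b := f w 1 with hb
  set a' := deriv f w 0 with ha'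
  set b' := deriv f w 1 with hb'
  set n : ℂ := a' * conj a' + b' * conj b' with hn
  set W : ℂ := a * b' - b * a' with hWdef
  have hn0 : n ≠ 0 := by
    have : n = ((Complex.normSq a' + Complex.normSq b' : ℝ) : ℂ) := by
      simp [hn, Complex.mul_conj]
    rw [this]
    intro h
    have h' : Complex.normSq a' + Complex.normSq b' = 0 := by exact_mod_cast h
    have ha0 : a' = 0 := by
      have := Complex.normSq_nonneg a'; have := Complex.normSq_nonneg b'
      have : Complex.normSq a' = 0 := by linarith
      exact Complex.normSq_eq_zero.mp this
    have hb0 : b' = 0 := by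
      have := Complex.normSq_nonneg a'; have := Complex.normSq_nonneg b'
      have : Complex.normSq b' = 0 := by linarith
      exact Complex.normSq_eq_zero.mp this
    exact h1 (funext fun j => by fin_cases j <;> simpa [ha', hb'] using (by assumption))
  have e0 : posN f w 0 = conj b' * W / n := by
    simp only [posN, Pi.sub_apply, Pi.smul_apply, smul_eq_mul, herm_two, ← ha, ← hb, ← ha', ← hb']
    rw [← hn]
    field_simp
    ring
  have e1 : posN f w 1 = -(conj a' * W) / n := by
    simp only [posN, Pi.sub_apply, Pi.smul_apply, smul_eq_mul, herm_two, ← ha, ← hb, ← ha', ← hb']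
    rw [← hn]
    field_simp
    ring
  have hW0 : W ≠ 0 := by
    intro h
    apply h2
    funext j
    fin_cases j <;> simp [e0, e1, h]
  have hcn : conj n = n := by simp [hn, map_add, map_mul]; ring
  have c0 : conj (posN f w 0) = b' * conj W / n := by
    rw [e0]; simp [map_div₀, map_mul, hcn, Complex.conj_conj]
  have c1 : conj (posN f w 1) = -(a' * conj W) / n := by
    rw [e1]; simp [map_div₀, map_mul, map_neg, hcn, Complex.conj_conj]
  have eH : herm (posN f w) (posN f w) = W * conj W / n := by
    rw [herm_two, e0, e1]
    simp only [map_div₀, map_mul, map_neg, hcn, Complex.conj_conj]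
    field_simp
    ring
  have hWc : conj W ≠ 0 := by simpa using hW0
  funext j
  have hd : ∀ k, dualCurve f w k = (2 * herm (posN f w) (posN f w))⁻¹ * posN f w k := by
    intro k; rfl
  fin_cases j <;>
  · simp only [Fin.zero_eta, Fin.mk_one, Fin.isValue, Matrix.cons_val_zero, Matrix.cons_val_one,
      Matrix.head_cons]
    rw [hd, map_mul, map_inv₀, map_mul, eH, map_div₀, map_mul, hcn, Complex.conj_conj, map_ofNat]
    first
      | rw [c0] | rw [c1]
    rw [div_eq_mul_inv, mul_inv, mul_inv, inv_inv]
    field_simp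

lemma Wne (f : ℂ → Fin 2 → ℂ) (w : ℂ) (h1 : deriv f w ≠ 0) (h2 : posN f w ≠ 0) :
    f w 0 * deriv f w 1 - f w 1 * deriv f w 0 ≠ 0 := by
  set a := f w 0 with ha
  set b := f w 1 with hb
  set a' := deriv f w 0 with ha'
  set b' := deriv f w 1 with hb'
  set n : ℂ := a' * conj a' + b' * conj b' with hn
  set W : ℂ := a * b' - b * a' with hWdef
  have hn0 : n ≠ 0 := by
    have : n = ((Complex.normSq a' + Complex.normSq b' : ℝ) : ℂ) := by
      simp [hn, Complex.mul_conj]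
    rw [this]
    intro h
    have h' : Complex.normSq a' + Complex.normSq b' = 0 := by exact_mod_cast h
    have ha0 : a' = 0 := by
      have := Complex.normSq_nonneg a'; have := Complex.normSq_nonneg b'
      have : Complex.normSq a' = 0 := by linarith
      exact Complex.normSq_eq_zero.mp this
    have hb0 : b' = 0 := by
      have := Complex.normSq_nonneg a'; have := Complex.normSq_nonneg b'
      have : Complex.normSq b' = 0 := by linarith
      exact Complex.normSq_eq_zero.mp this
    exact h1 (funext fun j => by fin_cases j <;> simpa [ha', hb'] using (by assumption))
  have e0 : posN f w 0 = conj b' * W / n := by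
    simp only [posN, Pi.sub_apply, Pi.smul_apply, smul_eq_mul, herm_two, ← ha, ← hb, ← ha', ← hb']
    rw [← hn]
    field_simp
    ring
  have e1 : posN f w 1 = -(conj a' * W) / n := by
    simp only [posN, Pi.sub_apply, Pi.smul_apply, smul_eq_mul, herm_two, ← ha, ← hb, ← ha', ← hb']
    rw [← hn]
    field_simp
    ring
  intro h
  apply h2
  funext j
  fin_cases j <;> simp [e0, e1, ← hWdef, h]


/-- For a holomorphic curve `f : U → ℂ²` with `f' ≠ 0` and `f^N ≠ 0` on `U`, the dual
curve `f*` is anti-holomorphic: `z ↦ conj (f*(z))` (componentwise) is holomorphic. -/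
theorem dualCurve_antiholomorphic (U : Set ℂ) (hU : IsOpen U)
    (f : ℂ → Fin 2 → ℂ)
    (hf : ∀ z ∈ U, DifferentiableAt ℂ f z)
    (hf' : ∀ z ∈ U, deriv f z ≠ 0)
    (hfN : ∀ z ∈ U, posN f z ≠ 0) :
    ∀ z ∈ U, DifferentiableAt ℂ (fun w => fun j => conj (dualCurve f w j)) z := by
  intro z hz
  have hmem : U ∈ nhds z := hU.mem_nhds hz
  have hA : AnalyticOnNhd ℂ f U :=
    (DifferentiableOn.analyticOnNhd (fun w hw => (hf w hw).differentiableWithinAt) hU)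
  have hdf : DifferentiableAt ℂ (deriv f) z := by
    have h1 : AnalyticAt ℂ (fderiv ℂ f) z := (hA z hz).fderiv
    have h2 : DifferentiableAt ℂ (fun w => fderiv ℂ f w 1) z :=
      (ContinuousLinearMap.apply ℂ (Fin 2 → ℂ) (1 : ℂ)).differentiableAt.comp z h1.differentiableAt
    have : (fun w => fderiv ℂ f w 1) = deriv f := funext fun w => fderiv_apply_one_eq_deriv
    rwa [this] at h2
  have hfj : ∀ j, DifferentiableAt ℂ (fun w => f w j) z := differentiableAt_pi.1 (hf z hz)
  have hdfj : ∀ j, DifferentiableAt ℂ (fun w => deriv f w j) z := differentiableAt_pi.1 hdf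
  have hWd : DifferentiableAt ℂ (fun w => f w 0 * deriv f w 1 - f w 1 * deriv f w 0) z :=
    ((hfj 0).mul (hdfj 1)).sub ((hfj 1).mul (hdfj 0))
  have hWne : f z 0 * deriv f z 1 - f z 1 * deriv f z 0 ≠ 0 := Wne f z (hf' z hz) (hfN z hz)
  have h2Wne : (2 : ℂ) * (f z 0 * deriv f z 1 - f z 1 * deriv f z 0) ≠ 0 :=
    mul_ne_zero two_ne_zero hWne
  have hg : DifferentiableAt ℂ
      (fun w => fun j => (2 * (f w 0 * deriv f w 1 - f w 1 * deriv f w 0))⁻¹ *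
        ![deriv f w 1, -(deriv f w 0)] j) z := by
    apply differentiableAt_pi.2
    intro j
    have hinv : DifferentiableAt ℂ
        (fun w => (2 * (f w 0 * deriv f w 1 - f w 1 * deriv f w 0))⁻¹) z :=
      ((differentiableAt_const (2:ℂ)).mul hWd).inv h2Wne
    fin_cases j
    · simpa [Pi.mul_def] using hinv.mul (hdfj 1)
    · simpa [Pi.mul_def] using hinv.mul ((hdfj 0).neg)
  apply hg.congr_of_eventuallyEq
  filter_upwards [hmem] with w hw
  exact key f w (hf' w hw) (hfN w hw)
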